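/- arXiv:2107.09107 — 3 statements merged into one kernel-verified Lean document; each statement's English description precedes it below -/
import Mathlib

section
/- For every fixed integer k ≥ 2 there is a constant C > 0 such that for all M ≥ 3, the number of integers a with 2 < a ≤ M and N_k(a) > k(k-1) is at most C · M^{1/2} · (log M)^{k-1}. -/
open Finset

lemma two_pow_le_central (b : ℕ) : 2 ^ b ≤ (2 * b).choose b := by
  induction b with
  | zero => simp
  | succ b ih =>
    have h1 : (2 * b).choose b ≤ (2 * b + 1).choose b :=
      Nat.choose_le_choose b (by omega)
    have h2 : (2 * b).choose b ≤ (2 * b + 1).choose (b + 1) := by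
      rw [Nat.choose_succ_succ]; exact Nat.le_add_right _ _
    have he : 2 * (b + 1) = (2 * b + 1) + 1 := by ring
    rw [he, Nat.choose_succ_succ]
    have : 2 ^ (b + 1) = 2 ^ b + 2 ^ b := by ring
    rw [this]
    exact Nat.add_le_add (ih.trans h1) (ih.trans h2)

lemma multinomial_eq_choose_mul {k : ℕ} (m : Fin k → ℕ) (i : Fin k) :
    Nat.multinomial Finset.univ m =
      (∑ j, m j).choose (m i) * Nat.multinomial (Finset.univ.erase i) m := by
  have hins : (Finset.univ : Finset (Fin k)) = insert i (Finset.univ.erase i) := by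
    rw [Finset.insert_erase (Finset.mem_univ i)]
  have hsum : m i + ∑ j ∈ Finset.univ.erase i, m j = ∑ j, m j :=
    Finset.add_sum_erase _ m (Finset.mem_univ i)
  conv_lhs => rw [hins]
  rw [Nat.multinomial_insert (Finset.notMem_erase i _), hsum]

lemma choose_le_multinomial {k : ℕ} (m : Fin k → ℕ) (i : Fin k) :
    (∑ j, m j).choose (m i) ≤ Nat.multinomial Finset.univ m := by
  have hsum : m i + ∑ j ∈ Finset.univ.erase i, m j = ∑ j, m j :=
    Finset.add_sum_erase _ m (Finset.mem_univ i)
  rw [multinomial_eq_choose_mul m i]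
  calc (∑ j, m j).choose (m i) = (∑ j, m j).choose (m i) * 1 := (mul_one _).symm
  _ ≤ _ := Nat.mul_le_mul_left _ (Nat.multinomial_pos _ _)

lemma multinomial_eq_one_of_sum_le_one {α : Type*} (s : Finset α) (f : α → ℕ)
    (h : ∑ i ∈ s, f i ≤ 1) : Nat.multinomial s f = 1 := by
  have hspec := Nat.multinomial_spec s f
  have hprod : (∏ i ∈ s, (f i).factorial) = 1 := by
    apply Finset.prod_eq_one
    intro i hi
    have : f i ≤ 1 := (Finset.single_le_sum (fun j _ => Nat.zero_le (f j)) hi).trans h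
    interval_cases (f i) <;> simp
  have hsumf : (∑ i ∈ s, f i).factorial = 1 := by
    interval_cases (∑ i ∈ s, f i) <;> simp
  rw [hprod, one_mul, hsumf] at hspec
  exact hspec

/-- A tuple is *trivial* for `a` if it is `a-1` in one coordinate, `1` in another, `0` elsewhere. -/
def IsTrivial (a : ℕ) {k : ℕ} (m : Fin k → ℕ) : Prop :=
  ∃ i j : Fin k, i ≠ j ∧ m i = a - 1 ∧ m j = 1 ∧ ∀ l, l ≠ i → l ≠ j → m l = 0

/-- `Nk k a` is the number of `k`-tuples `(m₁, …, m_k)` of nonnegative integers whose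
multinomial coefficient `(m₁ + ⋯ + m_k)! / (m₁! ⋯ m_k!)` equals `a`. -/
noncomputable def Nk (k : ℕ) (a : ℕ) : ℕ :=
  {m : Fin k → ℕ | Nat.multinomial Finset.univ m = a}.ncard

lemma exists_nontrivial {k a : ℕ} (ha : 2 < a) (h : k * (k - 1) < Nk k a) :
    ∃ m : Fin k → ℕ, Nat.multinomial Finset.univ m = a ∧ ¬ IsTrivial a m := by
  by_contra hcon
  push_neg at hcon
  set S : Set (Fin k → ℕ) := {m | Nat.multinomial Finset.univ m = a} with hS
  have hsub : S ⊆ (fun p : Fin k × Fin k =>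
      (fun l => if l = p.1 then a - 1 else if l = p.2 then 1 else 0 : Fin k → ℕ)) ''
      ↑((Finset.univ : Finset (Fin k)).offDiag) := by
    intro m hm
    obtain ⟨i, j, hij, hi, hj, h0⟩ := hcon m hm
    refine ⟨(i, j), by simp [Finset.mem_offDiag, hij], ?_⟩
    funext l
    by_cases hli : l = i
    · subst hli; simp [hi]
    · by_cases hlj : l = j
      · subst hlj; simp [hj, hli]
      · simp [hli, hlj, h0 l hli hlj]
  have hle : S.ncard ≤ k * (k - 1) := by
    calc S.ncard ≤ _ := Set.ncard_le_ncard hsub ((Finset.univ.offDiag.finite_toSet).image _)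
    _ ≤ (↑((Finset.univ : Finset (Fin k)).offDiag) : Set (Fin k × Fin k)).ncard :=
        Set.ncard_image_le (Finset.finite_toSet _)
    _ = (Finset.univ : Finset (Fin k)).offDiag.card := Set.ncard_coe_finset _
    _ = k * k - k := by rw [Finset.offDiag_card]; simp
    _ = k * (k - 1) := by
        rcases k with _ | n
        · simp
        · have : (n+1) * (n+1-1) + (n+1) = (n+1) * (n+1) := by simp; ring
          omega
  exact absurd (h.trans_le hle) (lt_irrefl _)

lemma exists_bounds {k M a : ℕ} (hk : 2 ≤ k) (ha : 2 < a) (haM : a ≤ M) {m : Fin k → ℕ}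
    (hm : Nat.multinomial Finset.univ m = a) (hnt : ¬ IsTrivial a m) :
    ∃ i₀ : Fin k, m i₀ ≤ Nat.sqrt (2 * M) ∧ ∀ j, j ≠ i₀ → m j ≤ Nat.log 2 M := by
  have hM0 : M ≠ 0 := by omega
  have : Nonempty (Fin k) := ⟨⟨0, by omega⟩⟩
  obtain ⟨i₀, -, hmax⟩ := Finset.exists_max_image Finset.univ m Finset.univ_nonempty
  have hsmall : ∀ j, j ≠ i₀ → m j ≤ Nat.log 2 M := by
    intro j hj
    have hpair : m i₀ + m j ≤ ∑ l, m l := by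
      have h := Finset.sum_le_sum_of_subset
        (Finset.subset_univ ({i₀, j} : Finset (Fin k))) (f := m)
      rwa [Finset.sum_pair (Ne.symm hj)] at h
    have h2 : 2 * m j ≤ ∑ l, m l := by
      have := hmax j (Finset.mem_univ j); omega
    have hch : 2 ^ (m j) ≤ a := by
      calc 2 ^ m j ≤ (2 * m j).choose (m j) := two_pow_le_central _
      _ ≤ (∑ l, m l).choose (m j) := Nat.choose_le_choose _ h2
      _ ≤ Nat.multinomial Finset.univ m := choose_le_multinomial m j
      _ = a := hm
    exact (Nat.le_log_iff_pow_le one_lt_two hM0).2 (hch.trans haM)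
  refine ⟨i₀, ?_, hsmall⟩
  have hdec := multinomial_eq_choose_mul m i₀
  have hsum : m i₀ + ∑ j ∈ Finset.univ.erase i₀, m j = ∑ j, m j :=
    Finset.add_sum_erase _ m (Finset.mem_univ i₀)
  set s := ∑ j ∈ Finset.univ.erase i₀, m j with hs
  have hs2 : 2 ≤ s := by
    by_contra hcon
    push_neg at hcon
    have h1 : Nat.multinomial (Finset.univ.erase i₀) m = 1 :=
      multinomial_eq_one_of_sum_le_one _ _ (by omega)
    have hm' : (∑ j, m j).choose (m i₀) = a := by
      rw [hdec, h1, mul_one] at hm; exact hm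
    rw [← hsum] at hm'
    interval_cases s
    · simp at hm'; omega
    · rw [Nat.choose_succ_self_right] at hm'
      obtain ⟨j, hjmem, hj1⟩ : ∃ j ∈ Finset.univ.erase i₀, 1 ≤ m j := by
        by_contra hno; push_neg at hno
        have : s = 0 := Finset.sum_eq_zero (fun j hj => by have := hno j hj; omega)
        omega
      have hj' := Finset.add_sum_erase (Finset.univ.erase i₀) m hjmem
      rw [← hs] at hj'
      have hrest : ∑ l ∈ (Finset.univ.erase i₀).erase j, m l = 0 := by omega
      have hmj : m j = 1 := by omega
      apply hnt
      refine ⟨i₀, j, (Finset.ne_of_mem_erase hjmem).symm, by omega, hmj, ?_⟩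
      intro l hli hlj
      have hlmem : l ∈ (Finset.univ.erase i₀).erase j := by
        simp [Finset.mem_erase, hli, hlj]
      exact (Finset.sum_eq_zero_iff).1 hrest l hlmem
  have hch : (m i₀ + 2).choose 2 ≤ a := by
    calc (m i₀ + 2).choose 2 = (m i₀ + 2).choose (m i₀) := Nat.choose_symm_add.symm
    _ ≤ (m i₀ + s).choose (m i₀) := Nat.choose_le_choose _ (by omega)
    _ = (∑ j, m j).choose (m i₀) := by rw [hsum]
    _ ≤ Nat.multinomial Finset.univ m := choose_le_multinomial m i₀
    _ = a := hm
  have hq : (m i₀ + 2) * (m i₀ + 2 - 1) / 2 ≤ M := by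
    rw [← Nat.choose_two_right]; exact hch.trans haM
  have he1 : m i₀ + 2 - 1 = m i₀ + 1 := rfl
  rw [he1] at hq
  have hxx : (m i₀ + 2) * (m i₀ + 1) = m i₀ * m i₀ + 3 * m i₀ + 2 := by ring
  rw [hxx] at hq
  rw [Nat.le_sqrt]
  generalize m i₀ * m i₀ = t at hq ⊢
  omega

theorem count_large_Nk (k : ℕ) (hk : 2 ≤ k) :
    ∃ C : ℝ, 0 < C ∧ ∀ M : ℕ, 3 ≤ M →
      (((Finset.Ioc 2 M).filter (fun a => k * (k - 1) < Nk k a)).card : ℝ) ≤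
        C * Real.sqrt M * (Real.log M) ^ (k - 1) := by
  classical
  have hlog2 : (0:ℝ) < Real.log 2 := Real.log_pos (by norm_num)
  set D : ℝ := 1 / Real.log 2 + 1 with hD
  have hD0 : 0 < D := by positivity
  have hk0 : (0:ℝ) < (k:ℝ) := by exact_mod_cast (by omega : 0 < k)
  refine ⟨3 * k * D ^ (k - 1), by positivity, ?_⟩
  intro M hM
  have hM0 : M ≠ 0 := by omega
  set B := Nat.sqrt (2 * M) with hB
  set L := Nat.log 2 M with hL
  set F : Finset (Fin k → ℕ) := Finset.univ.biUnion (fun i₀ : Fin k =>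
      Fintype.piFinset (fun j => if j = i₀ then Finset.range (B + 1)
        else Finset.range (L + 1))) with hF
  set s := (Finset.Ioc 2 M).filter (fun a => k * (k - 1) < Nk k a) with hsdef
  -- Step 1: injection into F
  have hex : ∀ a ∈ s, ∃ m : Fin k → ℕ, Nat.multinomial Finset.univ m = a ∧ m ∈ F := by
    intro a ha
    rw [hsdef, Finset.mem_filter, Finset.mem_Ioc] at ha
    obtain ⟨⟨ha2, haM⟩, hNk⟩ := ha
    obtain ⟨m, hm, hnt⟩ := exists_nontrivial ha2 hNk
    obtain ⟨i₀, hbig, hsmall⟩ := exists_bounds hk ha2 haM hm hnt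
    refine ⟨m, hm, ?_⟩
    rw [hF, Finset.mem_biUnion]
    refine ⟨i₀, Finset.mem_univ _, ?_⟩
    rw [Fintype.mem_piFinset]
    intro j
    by_cases hj : j = i₀
    · subst hj; simp [Finset.mem_range, Nat.lt_succ_iff, hbig, hB]
    · simp [hj, Finset.mem_range, Nat.lt_succ_iff, hsmall j hj, hL]
  choose! g hg1 hg2 using hex
  have hcard1 : s.card ≤ F.card := by
    apply Finset.card_le_card_of_injOn g hg2
    intro a ha b hb hab
    rw [← hg1 a ha, ← hg1 b hb, hab]
  -- Step 2: card of F
  have hcard2 : F.card ≤ k * ((B + 1) * (L + 1) ^ (k - 1)) := by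
    calc F.card ≤ ∑ i₀ : Fin k, (Fintype.piFinset (fun j => if j = i₀ then
          Finset.range (B + 1) else Finset.range (L + 1))).card :=
        Finset.card_biUnion_le
    _ = ∑ _i₀ : Fin k, (B + 1) * (L + 1) ^ (k - 1) := by
        apply Finset.sum_congr rfl
        intro i₀ _
        rw [Fintype.card_piFinset]
        have hpe : ∏ j : Fin k, (if j = i₀ then Finset.range (B + 1)
            else Finset.range (L + 1)).card
            = (Finset.range (B+1)).card *
              ∏ j ∈ Finset.univ.erase i₀, (if j = i₀ then Finset.range (B + 1)
                else Finset.range (L + 1)).card := by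
          rw [← Finset.mul_prod_erase Finset.univ
            (fun j => (if j = i₀ then Finset.range (B + 1) else Finset.range (L + 1)).card)
            (Finset.mem_univ i₀)]
          simp
        rw [hpe, Finset.card_range]
        congr 1
        rw [Finset.prod_congr rfl (fun j hj => by
          rw [if_neg (Finset.ne_of_mem_erase hj)]), Finset.prod_const,
          Finset.card_range, Finset.card_erase_of_mem (Finset.mem_univ i₀),
          Finset.card_univ, Fintype.card_fin]
    _ = k * ((B + 1) * (L + 1) ^ (k - 1)) := by
        rw [Finset.sum_const, Finset.card_univ, Fintype.card_fin, smul_eq_mul]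
  -- Step 3: real estimates
  have hMR : (1:ℝ) ≤ (M:ℝ) := by exact_mod_cast (by omega : 1 ≤ M)
  have hsqM : (1:ℝ) ≤ Real.sqrt M := Real.one_le_sqrt.2 hMR
  have hBle : ((B:ℝ) + 1) ≤ 3 * Real.sqrt M := by
    have hB2 : ((B:ℝ))^2 ≤ 2 * (M:ℝ) := by exact_mod_cast Nat.sqrt_le' (2 * M)
    have hBs : (B:ℝ) ≤ Real.sqrt (2 * M) :=
      (Real.le_sqrt (by positivity) (by positivity)).2 hB2
    have hsplit : Real.sqrt (2 * (M:ℝ)) = Real.sqrt 2 * Real.sqrt M :=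
      Real.sqrt_mul (by norm_num) _
    have h2le : Real.sqrt 2 ≤ 2 := by
      nlinarith [Real.sq_sqrt (by norm_num : (0:ℝ) ≤ 2), Real.sqrt_nonneg 2]
    have : (B:ℝ) ≤ 2 * Real.sqrt M := by
      calc (B:ℝ) ≤ Real.sqrt (2 * M) := hBs
      _ = Real.sqrt 2 * Real.sqrt M := hsplit
      _ ≤ 2 * Real.sqrt M := by nlinarith [Real.sqrt_nonneg (M:ℝ)]
    nlinarith
  have hMpos : (0:ℝ) < (M:ℝ) := by linarith
  have hlogM : (1:ℝ) ≤ Real.log M := by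
    rw [Real.le_log_iff_exp_le hMpos]
    have h3 : (3:ℝ) ≤ (M:ℝ) := by exact_mod_cast hM
    nlinarith [Real.exp_one_lt_d9]
  have hLle : ((L:ℝ) + 1) ≤ D * Real.log M := by
    have hpow : (2:ℝ) ^ L ≤ (M:ℝ) := by exact_mod_cast Nat.pow_log_le_self 2 hM0
    have hlogle : (L:ℝ) * Real.log 2 ≤ Real.log M := by
      have := Real.log_le_log (by positivity) hpow
      rwa [Real.log_pow] at this
    have hLd : (L:ℝ) ≤ 1 / Real.log 2 * Real.log M := by
      rw [div_mul_eq_mul_div, one_mul, le_div_iff₀ hlog2]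
      exact hlogle
    calc ((L:ℝ) + 1) ≤ 1 / Real.log 2 * Real.log M + Real.log M := add_le_add hLd hlogM
    _ = D * Real.log M := by rw [hD]; ring
  -- combine
  have hcast : (s.card : ℝ) ≤ (k:ℝ) * (((B:ℝ) + 1) * ((L:ℝ) + 1) ^ (k - 1)) := by
    exact_mod_cast hcard1.trans hcard2
  have hpowle : ((L:ℝ) + 1) ^ (k - 1) ≤ (D * Real.log M) ^ (k - 1) :=
    pow_le_pow_left₀ (by positivity) hLle _
  have hmain : (s.card : ℝ) ≤ (k:ℝ) * ((3 * Real.sqrt M) * (D * Real.log M) ^ (k - 1)) := by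
    refine hcast.trans ?_
    have h1 : ((B:ℝ) + 1) * ((L:ℝ) + 1) ^ (k - 1)
        ≤ (3 * Real.sqrt M) * (D * Real.log M) ^ (k - 1) :=
      mul_le_mul hBle hpowle (by positivity) (by positivity)
    exact mul_le_mul_of_nonneg_left h1 (by positivity)
  refine hmain.trans (le_of_eq ?_)
  rw [mul_pow]; ring
end

section
/- For every fixed integer k ≥ 2, the normal order of N_k is k(k-1); precisely, (1/M) · #{a : 1 < a ≤ M and N_k(a) ≠ k(k-1)} → 0 as M → ∞. -/
open Finset Nat Filter Real

lemma choose_le_multinomial' {α : Type*} [DecidableEq α] (s : Finset α) (f : α → ℕ) {i : α}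
    (hi : i ∈ s) : (∑ j ∈ s, f j).choose (f i) ≤ Nat.multinomial s f := by
  conv_rhs => rw [← Finset.insert_erase hi]
  rw [Nat.multinomial_insert (Finset.notMem_erase i s)]
  conv_lhs => rw [← Finset.insert_erase hi]
  rw [Finset.sum_insert (Finset.notMem_erase i s)]
  exact Nat.le_mul_of_pos_right _ (Nat.multinomial_pos _ _)

lemma peel_multinomial {k : ℕ} (m : Fin k → ℕ) (i : Fin k) :
    Nat.multinomial Finset.univ m =
      (∑ l, m l).choose (m i) * Nat.multinomial (Finset.univ.erase i) m := by
  have hi : i ∈ (Finset.univ : Finset (Fin k)) := Finset.mem_univ i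
  conv_lhs => rw [← Finset.insert_erase hi]
  rw [Nat.multinomial_insert (Finset.notMem_erase i _)]
  congr 2
  rw [← Finset.sum_insert (Finset.notMem_erase i _), Finset.insert_erase hi]

lemma pair_le_multinomial {k : ℕ} (m : Fin k → ℕ) {i j : Fin k} (hij : i ≠ j) :
    (∑ l, m l).choose (m i) * ((∑ l, m l) - m i).choose (m j) ≤
      Nat.multinomial Finset.univ m := by
  rw [peel_multinomial m i]
  have hsum : ∑ l ∈ Finset.univ.erase i, m l = (∑ l, m l) - m i := by
    have := Finset.add_sum_erase Finset.univ m (Finset.mem_univ i)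
    omega
  have hj : j ∈ Finset.univ.erase i := Finset.mem_erase.2 ⟨hij.symm, Finset.mem_univ j⟩
  have h2 := choose_le_multinomial' (Finset.univ.erase i) m hj
  rw [hsum] at h2
  exact Nat.mul_le_mul_left _ h2

lemma choose_mono_half (n : ℕ) : ∀ {a b : ℕ}, a ≤ b → 2 * b ≤ n →
    n.choose a ≤ n.choose b := by
  intro a b hab hb
  induction b with
  | zero => simp [Nat.le_zero.mp hab]
  | succ c ih =>
    rcases Nat.eq_or_lt_of_le hab with rfl | h
    · exact le_refl _
    · exact le_trans (ih (Nat.lt_succ_iff.mp h) (by omega))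
        (Nat.choose_le_succ_of_lt_half_left (by omega))

lemma choose_two_le_choose {n r : ℕ} (h2 : 2 ≤ r) (hr : r + 2 ≤ n) :
    n.choose 2 ≤ n.choose r := by
  by_cases h : 2 * r ≤ n
  · exact choose_mono_half n h2 h
  · rw [← Nat.choose_symm (by omega : r ≤ n)]
    exact choose_mono_half n (by omega) (by omega)

lemma two_pow_le_choose : ∀ (t n : ℕ), 2 * t ≤ n → 2 ^ t ≤ n.choose t := by
  intro t
  induction t with
  | zero => intro n _; simp
  | succ s ih =>
    intro n hn
    obtain ⟨m, rfl⟩ : ∃ m, n = m + 1 := ⟨n - 1, by omega⟩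
    have ihs := ih m (by omega)
    have key := Nat.add_one_mul_choose_eq m s
    have h1 : (s + 1) * 2 ^ (s + 1) ≤ (s + 1) * ((m + 1).choose (s + 1)) := by
      calc (s + 1) * 2 ^ (s + 1) = (2 * (s + 1)) * 2 ^ s := by ring
        _ ≤ (m + 1) * 2 ^ s := Nat.mul_le_mul_right _ (by omega)
        _ ≤ (m + 1) * m.choose s := Nat.mul_le_mul_left _ ihs
        _ = (m + 1).choose (s + 1) * (s + 1) := key
        _ = (s + 1) * ((m + 1).choose (s + 1)) := by ring
    exact Nat.le_of_mul_le_mul_left h1 (by omega)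

lemma two_mul_choose_two (n : ℕ) : 2 * n.choose 2 = n * (n - 1) := by
  rcases n with _ | p
  · simp
  · rw [Nat.choose_two_right]
    have : Even ((p + 1) * p) := by
      rcases Nat.even_or_odd p with h | h
      · exact (Nat.even_mul).2 (Or.inr h)
      · exact (Nat.even_mul).2 (Or.inl (by simpa using h.add_one))
    obtain ⟨c, hc⟩ := this
    simp only [Nat.add_sub_cancel]
    omega

lemma multinomial_two_support {k : ℕ} {m : Fin k → ℕ} {i j : Fin k} (hij : i ≠ j)
    (h : ∀ l, l ≠ i → l ≠ j → m l = 0) :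
    Nat.multinomial Finset.univ m = (m i + m j).choose (m i) := by
  have hsum : ∑ l, m l = m i + m j :=
    Finset.sum_eq_add i j hij (fun c _ hc => h c hc.1 hc.2)
      (fun hi => absurd (Finset.mem_univ i) hi) (fun hj => absurd (Finset.mem_univ j) hj)
  have hprod : ∏ l, (m l)! = (m i)! * (m j)! :=
    Finset.prod_eq_mul i j hij (fun c _ hc => by rw [h c hc.1 hc.2]; rfl)
      (fun hi => absurd (Finset.mem_univ i) hi) (fun hj => absurd (Finset.mem_univ j) hj)
  rw [Nat.multinomial, hsum, hprod, Nat.choose_eq_factorial_div_factorial (Nat.le_add_right _ _),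
    Nat.add_sub_cancel_left]

lemma multinomial_one_support {k : ℕ} {m : Fin k → ℕ} {i : Fin k}
    (h : ∀ l, l ≠ i → m l = 0) :
    Nat.multinomial Finset.univ m = 1 := by
  have hsum : ∑ l, m l = m i :=
    Finset.sum_eq_single i (fun c _ hc => h c hc) (fun hi => absurd (Finset.mem_univ i) hi)
  have hprod : ∏ l, (m l)! = (m i)! :=
    Finset.prod_eq_single i (fun c _ hc => by rw [h c hc]; rfl)
      (fun hi => absurd (Finset.mem_univ i) hi)
  rw [Nat.multinomial, hsum, hprod, Nat.div_self (Nat.factorial_pos _)]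

lemma multinomial_standard {k : ℕ} {a : ℕ} (ha : 2 ≤ a) {i j : Fin k} (hij : i ≠ j) :
    Nat.multinomial Finset.univ
      (fun l => if l = i then a - 1 else if l = j then 1 else 0) = a := by
  rw [multinomial_two_support hij (fun l hli hlj => by simp [hli, hlj])]
  simp [hij.symm]
  omega

lemma nonstandard_cases {k : ℕ} (hk : 2 ≤ k) {m : Fin k → ℕ} {a : ℕ}
    (hm : Nat.multinomial Finset.univ m = a) (ha : 3 ≤ a)
    (hns : ¬ ∃ i j, i ≠ j ∧ m i = a - 1 ∧ m j = 1 ∧ ∀ l, l ≠ i → l ≠ j → m l = 0) :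
    (∃ i j, i ≠ j ∧ 2 ≤ m i ∧ 2 ≤ m j) ∨ (∃ i j, i ≠ j ∧ m i = 1 ∧ m j = 1) := by
  by_contra hcon
  push_neg at hcon
  obtain ⟨h1, h2⟩ := hcon
  by_cases hbig : ∃ i, 2 ≤ m i
  · obtain ⟨i, hi⟩ := hbig
    by_cases hone : ∃ j, m j = 1
    · obtain ⟨j, hj⟩ := hone
      have hij : i ≠ j := by intro e; rw [e, hj] at hi; omega
      have hrest : ∀ l, l ≠ i → l ≠ j → m l = 0 := by
        intro l hli hlj
        have hb := h1 i l (fun e => hli e.symm) hi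
        have ho := h2 j l (fun e => hlj e.symm) hj
        omega
      have := multinomial_two_support hij hrest
      rw [hj, Nat.choose_succ_self_right] at this
      rw [this] at hm
      exact hns ⟨i, j, hij, by omega, hj, hrest⟩
    · push_neg at hone
      have hrest : ∀ l, l ≠ i → m l = 0 := by
        intro l hl
        have hb := h1 i l (fun e => hl e.symm) hi
        have := hone l
        omega
      rw [multinomial_one_support hrest] at hm
      omega
  · push_neg at hbig
    by_cases hone : ∃ j, m j = 1
    · obtain ⟨j, hj⟩ := hone
      have hrest : ∀ l, l ≠ j → m l = 0 := by
        intro l hl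
        have := h2 j l (fun e => hl e.symm) hj
        have := hbig l
        omega
      rw [multinomial_one_support hrest] at hm
      omega
    · push_neg at hone
      have hrest : ∀ l, l ≠ (⟨0, by omega⟩ : Fin k) → m l = 0 := by
        intro l _
        have := hbig l
        have := hone l
        omega
      rw [multinomial_one_support hrest] at hm
      omega


lemma pair_sum_le {k : ℕ} (m : Fin k → ℕ) {i j : Fin k} (hij : i ≠ j) :
    m i + m j ≤ ∑ l, m l := by
  calc m i + m j = ∑ l ∈ ({i, j} : Finset (Fin k)), m l := (Finset.sum_pair hij).symm
    _ ≤ ∑ l, m l := Finset.sum_le_sum_of_subset (Finset.subset_univ _)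

lemma nonstandard_sum_bound {k : ℕ} {m : Fin k → ℕ} {a : ℕ}
    (hm : Nat.multinomial Finset.univ m = a)
    (hc : (∃ i j, i ≠ j ∧ 2 ≤ m i ∧ 2 ≤ m j) ∨ (∃ i j, i ≠ j ∧ m i = 1 ∧ m j = 1)) :
    (∑ l, m l) * ((∑ l, m l) - 1) ≤ 2 * a := by
  rcases hc with ⟨i, j, hij, hi, hj⟩ | ⟨i, j, hij, hi, hj⟩
  · have hp := pair_sum_le m hij
    have h4 : (∑ l, m l).choose 2 ≤ (∑ l, m l).choose (m i) :=
      choose_two_le_choose hi (by omega)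
    have h5 := choose_le_multinomial' Finset.univ m (Finset.mem_univ i)
    rw [hm] at h5
    have := two_mul_choose_two (∑ l, m l)
    omega
  · have h5 := pair_le_multinomial m hij
    rw [hm, hi, hj, Nat.choose_one_right, Nat.choose_one_right] at h5
    omega

lemma Nk_eq_of_all_standard {k a : ℕ} (ha : 3 ≤ a)
    (hstd : ∀ m : Fin k → ℕ, Nat.multinomial Finset.univ m = a →
       ∃ i j, i ≠ j ∧ m i = a - 1 ∧ m j = 1 ∧ ∀ l, l ≠ i → l ≠ j → m l = 0) :
    Nk k a = k * (k - 1) := by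
  classical
  set f : Fin k × Fin k → (Fin k → ℕ) :=
    fun p l => if l = p.1 then a - 1 else if l = p.2 then 1 else 0 with hf
  have hval : ∀ p : Fin k × Fin k, p.1 ≠ p.2 → ∀ l : Fin k,
      (l = p.1 → f p l = a - 1) ∧ (l = p.2 → f p l = 1) ∧ (l ≠ p.1 → l ≠ p.2 → f p l = 0) := by
    intro p hp l
    refine ⟨fun h => ?_, fun h => ?_, fun h1 h2 => ?_⟩
    · simp [hf, h]
    · simp [hf, h, Ne.symm hp]
    · simp [hf, h1, h2]
  have hset : {m : Fin k → ℕ | Nat.multinomial Finset.univ m = a}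
      = ↑(Finset.image f Finset.univ.offDiag) := by
    ext m
    simp only [Set.mem_setOf_eq, Finset.coe_image, Set.mem_image, Finset.mem_coe,
      Finset.mem_offDiag]
    constructor
    · intro hma
      obtain ⟨i, j, hij, h1, h2, h3⟩ := hstd m hma
      refine ⟨(i, j), ⟨Finset.mem_univ _, Finset.mem_univ _, hij⟩, ?_⟩
      funext l
      by_cases hli : l = i
      · rw [((hval (i,j) hij l).1 hli)]; rw [hli, h1]
      · by_cases hlj : l = j
        · rw [((hval (i,j) hij l).2.1 hlj)]; rw [hlj, h2]
        · rw [((hval (i,j) hij l).2.2 hli hlj)]; rw [h3 l hli hlj]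
    · rintro ⟨⟨i, j⟩, ⟨-, -, hij⟩, rfl⟩
      exact multinomial_standard (by omega) hij
  have hinj : Set.InjOn f ↑(Finset.univ.offDiag : Finset (Fin k × Fin k)) := by
    intro p hp q hq hpq
    rw [Finset.mem_coe, Finset.mem_offDiag] at hp hq
    have hp12 := hp.2.2
    have hq12 := hq.2.2
    have e1 := congrFun hpq p.1
    have e2 := congrFun hpq p.2
    rw [(hval p hp12 p.1).1 rfl] at e1
    rw [(hval p hp12 p.2).2.1 rfl] at e2
    have h11 : p.1 = q.1 := by
      by_contra h
      by_cases h2 : p.1 = q.2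
      · rw [(hval q hq12 p.1).2.1 h2] at e1; omega
      · rw [(hval q hq12 p.1).2.2 h h2] at e1; omega
    have h22 : p.2 = q.2 := by
      by_contra h
      by_cases h2 : p.2 = q.1
      · rw [(hval q hq12 p.2).1 h2] at e2; omega
      · rw [(hval q hq12 p.2).2.2 h2 h] at e2; omega
    exact Prod.ext h11 h22
  rw [Nk, hset, Set.ncard_coe_finset, Finset.card_image_of_injOn hinj, Finset.offDiag_card]
  simp only [Finset.card_univ, Fintype.card_fin]
  rcases k with _ | n
  · simp
  · simp only [Nat.succ_sub_one]
    rw [Nat.mul_succ, Nat.add_sub_cancel]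

lemma card_bound {k : ℕ} (hk : 2 ≤ k) (M : ℕ) :
    (((Finset.Ioc 1 M).filter (fun a => Nk k a ≠ k * (k - 1))).card) ≤
      1 + k * (Nat.sqrt (2 * M) + 2) * (Nat.log 2 M + 1) ^ k := by
  classical
  set L := Nat.log 2 M with hL
  set N := Nat.sqrt (2 * M) + 1 with hN
  set T : Finset (Fin k × ℕ × (Fin k → ℕ)) :=
    Finset.univ ×ˢ Finset.range (N + 1) ×ˢ
      Fintype.piFinset (fun _ : Fin k => Finset.range (L + 1)) with hT
  set g : (Fin k × ℕ × (Fin k → ℕ)) → ℕ :=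
    fun p => Nat.multinomial Finset.univ (Function.update p.2.2 p.1 p.2.1) with hg
  have hsub : (Finset.Ioc 1 M).filter (fun a => Nk k a ≠ k * (k - 1)) ⊆
      insert 2 (T.image g) := by
    intro a haf
    rw [Finset.mem_filter, Finset.mem_Ioc] at haf
    obtain ⟨⟨ha1, haM⟩, habs⟩ := haf
    rcases eq_or_ne a 2 with rfl | ha2
    · exact Finset.mem_insert_self _ _
    have ha3 : 3 ≤ a := by omega
    have hexists : ∃ m : Fin k → ℕ, Nat.multinomial Finset.univ m = a ∧
        ¬ ∃ i j, i ≠ j ∧ m i = a - 1 ∧ m j = 1 ∧ ∀ l, l ≠ i → l ≠ j → m l = 0 := by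
      by_contra hno
      push_neg at hno
      exact habs (Nk_eq_of_all_standard ha3 hno)
    obtain ⟨m, hm, hns⟩ := hexists
    have hc := nonstandard_cases hk hm ha3 hns
    have hSb := nonstandard_sum_bound hm hc
    have hSN : (∑ l, m l) ≤ N := by
      rcases Nat.eq_zero_or_pos (∑ l, m l) with h0 | hpos
      · omega
      · have h1 : ((∑ l, m l) - 1) * ((∑ l, m l) - 1) ≤ 2 * M := by
          have : ((∑ l, m l) - 1) * ((∑ l, m l) - 1) ≤ (∑ l, m l) * ((∑ l, m l) - 1) :=
            Nat.mul_le_mul_right _ (by omega)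
          omega
        have := Nat.le_sqrt.mpr h1
        omega
    obtain ⟨i0, -, hmax⟩ := Finset.exists_max_image (Finset.univ : Finset (Fin k)) m
      ⟨⟨0, by omega⟩, Finset.mem_univ _⟩
    set gg : Fin k → ℕ := Function.update m i0 0 with hgg
    have hupd : Function.update gg i0 (m i0) = m := by
      funext l
      by_cases h : l = i0 <;> simp [hgg, Function.update, h]
    have hMne : M ≠ 0 := by omega
    have hmem : (i0, m i0, gg) ∈ T := by
      rw [hT, Finset.mem_product]
      refine ⟨Finset.mem_univ _, ?_⟩
      rw [Finset.mem_product]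
      constructor
      · rw [Finset.mem_range]
        show m i0 < N + 1
        have : m i0 ≤ ∑ l, m l :=
          Finset.single_le_sum (fun l _ => Nat.zero_le (m l)) (Finset.mem_univ i0)
        omega
      · rw [Fintype.mem_piFinset]
        intro i
        rw [Finset.mem_range]
        show gg i < L + 1
        by_cases h : i = i0
        · simp [hgg, h]
        · have hgi : gg i = m i := by simp [hgg, Function.update, h]
          have h2 : 2 * m i ≤ ∑ l, m l := by
            have := pair_sum_le m h
            have := hmax i (Finset.mem_univ i)
            omega
          have h3 : 2 ^ (m i) ≤ a := by
            calc 2 ^ (m i) ≤ (∑ l, m l).choose (m i) := two_pow_le_choose _ _ h2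
              _ ≤ Nat.multinomial Finset.univ m :=
                choose_le_multinomial' _ _ (Finset.mem_univ i)
              _ = a := hm
          have h4 : 2 ^ (m i) ≤ M := le_trans h3 haM
          have := (Nat.le_log_iff_pow_le (by norm_num) hMne).mpr h4
          rw [hgi]
          omega
    refine Finset.mem_insert_of_mem (Finset.mem_image.2 ⟨(i0, m i0, gg), hmem, ?_⟩)
    rw [hg]
    simp only
    rw [hupd, hm]
  calc (((Finset.Ioc 1 M).filter (fun a => Nk k a ≠ k * (k - 1))).card)
      ≤ (insert 2 (T.image g)).card := Finset.card_le_card hsub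
    _ ≤ 1 + (T.image g).card := by
        rw [Nat.add_comm]
        exact Finset.card_insert_le _ _
    _ ≤ 1 + T.card := by
        exact Nat.add_le_add_left (Finset.card_image_le) _
    _ = 1 + k * (Nat.sqrt (2 * M) + 2) * (Nat.log 2 M + 1) ^ k := by
        rw [hT, Finset.card_product, Finset.card_product, Fintype.card_piFinset]
        simp only [Finset.card_univ, Fintype.card_fin, Finset.card_range, Finset.prod_const,
          Finset.card_univ, Fintype.card_fin]
        rw [hN, hL]
        ring

theorem normal_order_Nk (k : ℕ) (hk : 2 ≤ k) :
    Filter.Tendsto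
      (fun M : ℕ => (((Finset.Ioc 1 M).filter (fun a => Nk k a ≠ k * (k - 1))).card : ℝ) / M)
      Filter.atTop (nhds 0) := by
  set C : ℝ := 1 + 4 * k * 3 ^ k with hC
  have hCpos : 0 < C := by positivity
  -- the real comparison function tends to 0
  have hlittle : (fun x : ℝ => Real.log x ^ k) =o[atTop] Real.sqrt := by
    have h := isLittleO_log_rpow_rpow_atTop (k : ℝ) (by norm_num : (0:ℝ) < 1/2)
    refine h.congr' ?_ ?_
    · filter_upwards with x
      rw [Real.rpow_natCast]
    · filter_upwards [Filter.eventually_ge_atTop (0:ℝ)] with x hx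
      rw [Real.sqrt_eq_rpow]
  have h_lim : Tendsto (fun x : ℝ => C * (Real.log x ^ k / Real.sqrt x)) atTop (nhds 0) := by
    have := (hlittle.tendsto_div_nhds_zero).const_mul C
    simpa using this
  have hnat : Tendsto (fun M : ℕ => C * (Real.log M ^ k / Real.sqrt M)) atTop (nhds 0) :=
    h_lim.comp tendsto_natCast_atTop_atTop
  refine tendsto_of_tendsto_of_tendsto_of_le_of_le' tendsto_const_nhds hnat ?_ ?_
  · filter_upwards with M
    positivity
  · filter_upwards [Filter.eventually_ge_atTop 3] with M hM3
    have hx3 : (3:ℝ) ≤ (M:ℝ) := by exact_mod_cast hM3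
    have hx0 : (0:ℝ) < M := by linarith
    have hsq0 : (0:ℝ) < Real.sqrt M := Real.sqrt_pos.mpr hx0
    have hsq1 : (1:ℝ) ≤ Real.sqrt M := by
      rw [show (1:ℝ) = Real.sqrt 1 from (Real.sqrt_one).symm]
      exact Real.sqrt_le_sqrt (by linarith)
    have hlog1 : (1:ℝ) ≤ Real.log M := by
      rw [Real.le_log_iff_exp_le hx0]
      calc Real.exp 1 ≤ 2.7182818286 := (Real.exp_one_lt_d9).le
        _ ≤ 3 := by norm_num
        _ ≤ (M:ℝ) := hx3
    have hlogpos : (0:ℝ) < Real.log M := by linarith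
    -- bound on the nat sqrt
    have hs : ((Nat.sqrt (2 * M) : ℕ) : ℝ) + 2 ≤ 4 * Real.sqrt M := by
      have h1 : ((Nat.sqrt (2 * M) : ℕ) : ℝ) ≤ Real.sqrt (2 * (M:ℝ)) := by
        refine (Real.le_sqrt (by positivity) (by positivity)).mpr ?_
        have h0 : ((Nat.sqrt (2 * M) : ℕ) : ℝ) ^ 2 ≤ ((2 * M : ℕ) : ℝ) := by
          rw [sq]
          exact_mod_cast Nat.sqrt_le (2 * M)
        push_cast at h0 ⊢
        linarith
      have h2 : Real.sqrt (2 * (M:ℝ)) ≤ 2 * Real.sqrt M := by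
        rw [Real.sqrt_mul (by norm_num) (M:ℝ)]
        have hs2 : Real.sqrt 2 ≤ 2 := by
          nlinarith [Real.sq_sqrt (by norm_num : (0:ℝ) ≤ 2), Real.sqrt_nonneg 2]
        nlinarith [Real.sqrt_nonneg (M:ℝ)]
      have h3 : (2:ℝ) ≤ 2 * Real.sqrt M := by linarith
      calc ((Nat.sqrt (2 * M) : ℕ) : ℝ) + 2 ≤ 2 * Real.sqrt M + 2 * Real.sqrt M := by linarith
        _ = 4 * Real.sqrt M := by ring
    -- bound on the nat log
    have hl : ((Nat.log 2 M : ℕ) : ℝ) + 1 ≤ 3 * Real.log M := by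
      have hMne : M ≠ 0 := by omega
      have h1 : (2:ℝ) ^ (Nat.log 2 M : ℕ) ≤ (M:ℝ) := by
        exact_mod_cast Nat.pow_log_le_self 2 hMne
      have h2 : ((Nat.log 2 M : ℕ) : ℝ) * Real.log 2 ≤ Real.log M := by
        calc ((Nat.log 2 M : ℕ) : ℝ) * Real.log 2
            = Real.log ((2:ℝ) ^ (Nat.log 2 M : ℕ)) := (Real.log_pow _ _).symm
          _ ≤ Real.log M := Real.log_le_log (show (0:ℝ) < (2:ℝ) ^ (Nat.log 2 M : ℕ) by positivity) h1
      have hlog2 : (0.6931471803 : ℝ) < Real.log 2 := Real.log_two_gt_d9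
      have h3 : ((Nat.log 2 M : ℕ) : ℝ) ≤ 2 * Real.log M := by
        nlinarith [(show (0:ℝ) ≤ ((Nat.log 2 M : ℕ):ℝ) from Nat.cast_nonneg _)]
      linarith
    -- assemble
    have hBle : ((1 + k * (Nat.sqrt (2 * M) + 2) * (Nat.log 2 M + 1) ^ k : ℕ) : ℝ) ≤
        C * Real.sqrt M * Real.log M ^ k := by
      push_cast
      have hLnn : (0:ℝ) ≤ ((Nat.log 2 M : ℕ) : ℝ) + 1 := by positivity
      have hpow : (((Nat.log 2 M : ℕ) : ℝ) + 1) ^ k ≤ (3 * Real.log M) ^ k :=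
        pow_le_pow_left₀ hLnn hl k
      have hpow2 : (3 * Real.log M) ^ k = 3 ^ k * Real.log M ^ k := mul_pow _ _ _
      have hk0 : (0:ℝ) ≤ (k:ℝ) := Nat.cast_nonneg k
      have hterm : (k:ℝ) * (((Nat.sqrt (2*M) : ℕ):ℝ) + 2) * (((Nat.log 2 M : ℕ):ℝ) + 1) ^ k ≤
          (k:ℝ) * (4 * Real.sqrt M) * (3 ^ k * Real.log M ^ k) := by
        have e1 : (k:ℝ) * (((Nat.sqrt (2*M) : ℕ):ℝ) + 2) ≤ (k:ℝ) * (4 * Real.sqrt M) :=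
          mul_le_mul_of_nonneg_left hs hk0
        have e2 : (((Nat.log 2 M : ℕ):ℝ) + 1) ^ k ≤ 3 ^ k * Real.log M ^ k := by
          rw [← hpow2]; exact hpow
        have e3 : (0:ℝ) ≤ (k:ℝ) * (((Nat.sqrt (2*M) : ℕ):ℝ) + 2) := by positivity
        have e4 : (0:ℝ) ≤ (k:ℝ) * (4 * Real.sqrt M) := by positivity
        exact mul_le_mul e1 e2 (by positivity) e4
      have h1le : (1:ℝ) ≤ Real.sqrt M * Real.log M ^ k := by
        have hp : (1:ℝ) ^ k ≤ Real.log M ^ k := pow_le_pow_left₀ (by norm_num) hlog1 k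
        rw [one_pow] at hp
        nlinarith
      calc (1:ℝ) + (k:ℝ) * (((Nat.sqrt (2*M) : ℕ):ℝ) + 2) * (((Nat.log 2 M : ℕ):ℝ) + 1) ^ k
          ≤ Real.sqrt M * Real.log M ^ k +
            (k:ℝ) * (4 * Real.sqrt M) * (3 ^ k * Real.log M ^ k) := by linarith
        _ = (1 + 4 * k * 3 ^ k) * Real.sqrt M * Real.log M ^ k := by ring
        _ = C * Real.sqrt M * Real.log M ^ k := by rw [hC]
    -- conclude the division inequality
    have hineq : (((Finset.Ioc 1 M).filter (fun a => Nk k a ≠ k * (k - 1))).card : ℝ) ≤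
        ((1 + k * (Nat.sqrt (2 * M) + 2) * (Nat.log 2 M + 1) ^ k : ℕ) : ℝ) :=
      Nat.cast_le.mpr (card_bound hk M)
    have hfinal : (((Finset.Ioc 1 M).filter (fun a => Nk k a ≠ k * (k - 1))).card : ℝ) / M ≤
        C * (Real.log M ^ k / Real.sqrt M) := by
      rw [mul_div_assoc'] at *
      rw [div_le_div_iff₀ hx0 hsq0]
      have hB : (((Finset.Ioc 1 M).filter (fun a => Nk k a ≠ k * (k - 1))).card : ℝ) ≤
          C * Real.sqrt M * Real.log M ^ k := le_trans hineq hBle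
      have := mul_le_mul_of_nonneg_right hB hsq0.le
      calc (((Finset.Ioc 1 M).filter (fun a => Nk k a ≠ k * (k - 1))).card : ℝ) * Real.sqrt M
          ≤ C * Real.sqrt M * Real.log M ^ k * Real.sqrt M := this
        _ = C * Real.log M ^ k * (Real.sqrt M * Real.sqrt M) := by ring
        _ = C * Real.log M ^ k * M := by rw [Real.mul_self_sqrt hx0.le]
    exact hfinal
end

section
/- For every fixed integer k ≥ 4, the set of integers a > 1 with N_k(a) ≥ 2·k! + k(k-1) is infinite. -/
open Finset
open scoped Nat


/-- `n ≤ choose n r` when `1 ≤ r` and `2r ≤ n`. -/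
lemma choose_ge_self_aux {n r : ℕ} (h1 : 1 ≤ r) (h2 : 2 * r ≤ n) : n ≤ n.choose r := by
  induction r with
  | zero => omega
  | succ m ih =>
    rcases Nat.eq_zero_or_pos m with hm | hm
    · subst hm; simp [Nat.choose_one_right]
    · exact le_trans (ih hm (by omega))
        (Nat.choose_le_succ_of_lt_half_left (by omega))

lemma choose_ge_self {n r : ℕ} (h1 : 1 ≤ r) (h2 : r < n) : n ≤ n.choose r := by
  rcases le_or_gt (2 * r) n with h | h
  · exact choose_ge_self_aux h1 h
  · rw [← Nat.choose_symm (le_of_lt h2)]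
    exact choose_ge_self_aux (by omega) (by omega)

lemma sum_le_multinomial {k : ℕ} (m : Fin k → ℕ) (p q : Fin k) (hpq : p ≠ q)
    (hp : 0 < m p) (hq : 0 < m q) : ∑ i, m i ≤ Nat.multinomial Finset.univ m := by
  have hins : (Finset.univ : Finset (Fin k)) = insert p (Finset.univ.erase p) :=
    (Finset.insert_erase (Finset.mem_univ p)).symm
  rw [hins, Nat.multinomial_insert (Finset.notMem_erase p _),
    Finset.sum_insert (Finset.notMem_erase p _)]
  have hq' : q ∈ Finset.univ.erase p := Finset.mem_erase.mpr ⟨Ne.symm hpq, Finset.mem_univ q⟩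
  have h1 : m q ≤ ∑ i ∈ Finset.univ.erase p, m i :=
    Finset.single_le_sum (fun i _ => Nat.zero_le _) hq'
  have h2 : 0 < Nat.multinomial (Finset.univ.erase p) m := Nat.multinomial_pos _ _
  calc m p + ∑ i ∈ Finset.univ.erase p, m i
      ≤ (m p + ∑ i ∈ Finset.univ.erase p, m i).choose (m p) := choose_ge_self hp (by omega)
    _ ≤ (m p + ∑ i ∈ Finset.univ.erase p, m i).choose (m p) *
          Nat.multinomial (Finset.univ.erase p) m := Nat.le_mul_of_pos_right _ h2

lemma multinomial_eq_one {k : ℕ} (m : Fin k → ℕ) (p : Fin k) (h : ∀ i, i ≠ p → m i = 0) :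
    Nat.multinomial Finset.univ m = 1 := by
  have hspec := Nat.multinomial_spec (Finset.univ) m
  have hsum : ∑ i, m i = m p := by
    rw [← Finset.sum_subset (Finset.subset_univ {p})
      (fun x _ hx => h x (by simpa using hx))]
    simp
  have hprod : ∏ i, (m i)! = (m p)! := by
    rw [← Finset.prod_subset (Finset.subset_univ {p})
      (fun x _ hx => by rw [h x (by simpa using hx)]; rfl)]
    simp
  rw [hsum, hprod] at hspec
  have := Nat.factorial_pos (m p)
  exact Nat.eq_of_mul_eq_mul_left this (by rw [hspec, mul_one])

lemma Sa_finite {k : ℕ} (hk : 0 < k) {a : ℕ} (ha : 1 < a) :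
    {m : Fin k → ℕ | Nat.multinomial Finset.univ m = a}.Finite := by
  apply Set.Finite.subset (Set.Finite.pi (fun _ : Fin k => Set.finite_Iic a))
  intro m hm
  simp only [Set.mem_setOf_eq] at hm
  rw [Set.mem_pi]
  intro i _
  simp only [Set.mem_Iic]
  by_cases hpos : ∃ p q : Fin k, p ≠ q ∧ 0 < m p ∧ 0 < m q
  · obtain ⟨p, q, hpq, hp, hq⟩ := hpos
    have h1 := sum_le_multinomial m p q hpq hp hq
    have h2 : m i ≤ ∑ j, m j := Finset.single_le_sum (fun j _ => Nat.zero_le _) (Finset.mem_univ i)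
    omega
  · exfalso
    push_neg at hpos
    rcases Classical.em (∃ p, 0 < m p) with ⟨p, hp⟩ | hno
    · have := multinomial_eq_one m p (fun i hi => by
        have := hpos p i (Ne.symm hi) hp
        omega)
      omega
    · push_neg at hno
      have := multinomial_eq_one m ⟨0, hk⟩ (fun i _ => by have := hno i; omega)
      omega

def mm1 (k t : ℕ) : Fin k → ℕ := fun x =>
  if x.val = 0 then 6*t-1 else if x.val = 1 then 3*t else if x.val = 2 then t-1
  else if x.val = 3 then 2*t else 7*t + x.val

def mm2 (k t : ℕ) : Fin k → ℕ := fun x =>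
  if x.val = 0 then 6*t else if x.val = 1 then 3*t-1 else if x.val = 2 then t
  else if x.val = 3 then 2*t-1 else 7*t + x.val

lemma mm1_inj {k t : ℕ} (ht : 3 ≤ t) : Function.Injective (mm1 k t) := by
  intro x y h
  unfold mm1 at h
  split_ifs at h <;> (apply Fin.ext; omega)

lemma mm2_inj {k t : ℕ} (ht : 3 ≤ t) : Function.Injective (mm2 k t) := by
  intro x y h
  unfold mm2 at h
  split_ifs at h <;> (apply Fin.ext; omega)

lemma mm1_pos {k t : ℕ} (ht : 3 ≤ t) (x : Fin k) : 0 < mm1 k t x := by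
  unfold mm1; split_ifs <;> omega

lemma mm2_pos {k t : ℕ} (ht : 3 ≤ t) (x : Fin k) : 0 < mm2 k t x := by
  unfold mm2; split_ifs <;> omega

lemma mm1_ne_t {k t : ℕ} (ht : 3 ≤ t) (x : Fin k) : mm1 k t x ≠ t := by
  unfold mm1; split_ifs <;> omega

lemma split4_sum {k : ℕ} (hk : 4 ≤ k) (f : Fin k → ℕ) :
    ∑ i, f i = f ⟨0, by omega⟩ + f ⟨1, by omega⟩ + f ⟨2, by omega⟩ + f ⟨3, by omega⟩
      + ∑ i ∈ Finset.univ.filter (fun x : Fin k => ¬ x.val < 4), f i := by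
  rw [← Finset.sum_filter_add_sum_filter_not Finset.univ (fun x : Fin k => x.val < 4) f]
  congr 1
  have h : Finset.univ.filter (fun x : Fin k => x.val < 4)
      = ({⟨0, by omega⟩, ⟨1, by omega⟩, ⟨2, by omega⟩, ⟨3, by omega⟩} : Finset (Fin k)) := by
    ext x
    simp [Fin.ext_iff]
    omega
  rw [h, Finset.sum_insert (by norm_num [Fin.ext_iff]),
    Finset.sum_insert (by norm_num [Fin.ext_iff]),
    Finset.sum_insert (by norm_num [Fin.ext_iff]), Finset.sum_singleton]
  ring

lemma split4_prod {k : ℕ} (hk : 4 ≤ k) (f : Fin k → ℕ) :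
    ∏ i, f i = f ⟨0, by omega⟩ * f ⟨1, by omega⟩ * f ⟨2, by omega⟩ * f ⟨3, by omega⟩
      * ∏ i ∈ Finset.univ.filter (fun x : Fin k => ¬ x.val < 4), f i := by
  rw [← Finset.prod_filter_mul_prod_filter_not Finset.univ (fun x : Fin k => x.val < 4) f]
  congr 1
  have h : Finset.univ.filter (fun x : Fin k => x.val < 4)
      = ({⟨0, by omega⟩, ⟨1, by omega⟩, ⟨2, by omega⟩, ⟨3, by omega⟩} : Finset (Fin k)) := by
    ext x
    simp [Fin.ext_iff]
    omega
  rw [h, Finset.prod_insert (by norm_num [Fin.ext_iff]),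
    Finset.prod_insert (by norm_num [Fin.ext_iff]),
    Finset.prod_insert (by norm_num [Fin.ext_iff]), Finset.prod_singleton]
  ring

lemma fact_swap {a b c d : ℕ} (h : (a+1)*(c+1) = (b+1)*(d+1)) :
    (a+1)! * b ! * (c+1)! * d ! = a ! * (b+1)! * c ! * (d+1)! :=
  calc (a+1)! * b ! * (c+1)! * d !
      = ((a+1)*(c+1)) * (a ! * b ! * c ! * d !) := by
        rw [Nat.factorial_succ, Nat.factorial_succ]; ring
    _ = ((b+1)*(d+1)) * (a ! * b ! * c ! * d !) := by rw [h]
    _ = a ! * (b+1)! * c ! * (d+1)! := by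
        rw [Nat.factorial_succ, Nat.factorial_succ]; ring

lemma factprod (t : ℕ) (ht : 1 ≤ t) :
    (6*t)! * (3*t-1)! * t ! * (2*t-1)! = (6*t-1)! * (3*t)! * (t-1)! * (2*t)! := by
  have h1 : 6*t-1+1 = 6*t := by omega
  have h2 : 3*t-1+1 = 3*t := by omega
  have h3 : t-1+1 = t := by omega
  have h4 : 2*t-1+1 = 2*t := by omega
  have key := fact_swap (a := 6*t-1) (b := 3*t-1) (c := t-1) (d := 2*t-1)
    (by rw [h1, h2, h3, h4]; ring)
  rw [h1, h2, h3, h4] at key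
  exact key

lemma mm_sum_eq {k t : ℕ} (hk : 4 ≤ k) (ht : 3 ≤ t) :
    ∑ i, mm2 k t i = ∑ i, mm1 k t i := by
  rw [split4_sum hk (mm2 k t), split4_sum hk (mm1 k t)]
  have h1 : ∑ i ∈ Finset.univ.filter (fun x : Fin k => ¬ x.val < 4), mm2 k t i
      = ∑ i ∈ Finset.univ.filter (fun x : Fin k => ¬ x.val < 4), mm1 k t i := by
    refine Finset.sum_congr rfl (fun x hx => ?_)
    simp only [Finset.mem_filter] at hx
    unfold mm1 mm2
    rw [if_neg (by omega), if_neg (by omega), if_neg (by omega), if_neg (by omega),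
      if_neg (by omega), if_neg (by omega), if_neg (by omega), if_neg (by omega)]
  rw [h1]
  have e0 : mm2 k t ⟨0, by omega⟩ = 6*t := rfl
  have e1 : mm2 k t ⟨1, by omega⟩ = 3*t-1 := rfl
  have e2 : mm2 k t ⟨2, by omega⟩ = t := rfl
  have e3 : mm2 k t ⟨3, by omega⟩ = 2*t-1 := rfl
  have f0 : mm1 k t ⟨0, by omega⟩ = 6*t-1 := rfl
  have f1 : mm1 k t ⟨1, by omega⟩ = 3*t := rfl
  have f2 : mm1 k t ⟨2, by omega⟩ = t-1 := rfl
  have f3 : mm1 k t ⟨3, by omega⟩ = 2*t := rfl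
  rw [e0, e1, e2, e3, f0, f1, f2, f3]
  omega

lemma mm_prod_eq {k t : ℕ} (hk : 4 ≤ k) (ht : 3 ≤ t) :
    ∏ i, (mm2 k t i)! = ∏ i, (mm1 k t i)! := by
  rw [split4_prod hk (fun i => (mm2 k t i)!), split4_prod hk (fun i => (mm1 k t i)!)]
  have h1 : ∏ i ∈ Finset.univ.filter (fun x : Fin k => ¬ x.val < 4), (mm2 k t i)!
      = ∏ i ∈ Finset.univ.filter (fun x : Fin k => ¬ x.val < 4), (mm1 k t i)! := by
    refine Finset.prod_congr rfl (fun x hx => ?_)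
    simp only [Finset.mem_filter] at hx
    unfold mm1 mm2
    rw [if_neg (by omega), if_neg (by omega), if_neg (by omega), if_neg (by omega),
      if_neg (by omega), if_neg (by omega), if_neg (by omega), if_neg (by omega)]
  rw [h1]
  have e0 : mm2 k t ⟨0, by omega⟩ = 6*t := rfl
  have e1 : mm2 k t ⟨1, by omega⟩ = 3*t-1 := rfl
  have e2 : mm2 k t ⟨2, by omega⟩ = t := rfl
  have e3 : mm2 k t ⟨3, by omega⟩ = 2*t-1 := rfl
  have f0 : mm1 k t ⟨0, by omega⟩ = 6*t-1 := rfl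
  have f1 : mm1 k t ⟨1, by omega⟩ = 3*t := rfl
  have f2 : mm1 k t ⟨2, by omega⟩ = t-1 := rfl
  have f3 : mm1 k t ⟨3, by omega⟩ = 2*t := rfl
  simp only [e0, e1, e2, e3, f0, f1, f2, f3]
  rw [factprod t (by omega)]

lemma mm_multinomial_eq {k t : ℕ} (hk : 4 ≤ k) (ht : 3 ≤ t) :
    Nat.multinomial Finset.univ (mm2 k t) = Nat.multinomial Finset.univ (mm1 k t) := by
  rw [Nat.multinomial, Nat.multinomial, mm_sum_eq hk ht, mm_prod_eq hk ht]

lemma multinomial_comp_perm {k : ℕ} (m : Fin k → ℕ) (σ : Equiv.Perm (Fin k)) :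
    Nat.multinomial Finset.univ (m ∘ σ) = Nat.multinomial Finset.univ m := by
  rw [Nat.multinomial, Nat.multinomial,
    show ∑ i, (m ∘ σ) i = ∑ i, m i from Equiv.sum_comp σ m,
    show ∏ i, ((m ∘ σ) i)! = ∏ i, (m i)! from Equiv.prod_comp σ (fun j => (m j)!)]

def gfun (k a : ℕ) (p : Fin k × Fin k) : Fin k → ℕ :=
  fun x => if x = p.1 then 1 else if x = p.2 then a - 1 else 0

lemma gfun_injOn {k a : ℕ} (ha : 3 ≤ a) :
    Set.InjOn (gfun k a) {p : Fin k × Fin k | p.1 ≠ p.2} := by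
  intro p hp q hq h
  simp only [Set.mem_setOf_eq] at hp hq
  have e1 : (1:ℕ) = if p.1 = q.1 then 1 else if p.1 = q.2 then a - 1 else 0 := by
    have := congrFun h p.1
    simpa [gfun] using this
  have hq1 : p.1 = q.1 := by
    by_contra hne
    rw [if_neg hne] at e1
    split_ifs at e1 <;> omega
  have e2 : (a - 1 : ℕ) = if p.2 = q.1 then 1 else if p.2 = q.2 then a - 1 else 0 := by
    have := congrFun h p.2
    simpa [gfun, if_neg (Ne.symm hp)] using this
  have hq2 : p.2 = q.2 := by
    by_contra hne
    rw [if_neg hne] at e2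
    split_ifs at e2 <;> omega
  exact Prod.ext hq1 hq2

lemma gfun_multinomial {k a : ℕ} (hk : 4 ≤ k) (ha : 3 ≤ a) (p : Fin k × Fin k)
    (hp : p.1 ≠ p.2) : Nat.multinomial Finset.univ (gfun k a p) = a := by
  have hmem : p.1 ∉ ({p.2} : Finset (Fin k)) := by simpa using hp
  have hsub : ({p.1, p.2} : Finset (Fin k)) ⊆ Finset.univ := Finset.subset_univ _
  have hout : ∀ x ∈ Finset.univ, x ∉ ({p.1, p.2} : Finset (Fin k)) → gfun k a p x = 0 := by
    intro x _ hx
    simp only [Finset.mem_insert, Finset.mem_singleton] at hx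
    push_neg at hx
    simp [gfun, hx.1, hx.2]
  have hg1 : gfun k a p p.1 = 1 := by simp [gfun]
  have hg2 : gfun k a p p.2 = a - 1 := by simp [gfun, Ne.symm hp]
  have hsum : ∑ x, gfun k a p x = a := by
    rw [← Finset.sum_subset hsub hout, Finset.sum_insert hmem, Finset.sum_singleton,
      hg1, hg2]
    omega
  have hprod : ∏ x, (gfun k a p x)! = (a-1)! := by
    rw [← Finset.prod_subset hsub (fun x hx1 hx2 => by rw [hout x hx1 hx2]; rfl),
      Finset.prod_insert hmem, Finset.prod_singleton, hg1, hg2]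
    simp
  rw [Nat.multinomial, hsum, hprod]
  obtain ⟨b, rfl⟩ : ∃ b, a = b + 1 := ⟨a-1, by omega⟩
  rw [Nat.add_sub_cancel, Nat.factorial_succ, Nat.mul_div_cancel _ (Nat.factorial_pos b)]

lemma offdiag_card {k : ℕ} :
    ((Finset.univ : Finset (Fin k × Fin k)).filter (fun p => p.1 ≠ p.2)).card = k * (k-1) := by
  rcases Nat.eq_zero_or_pos k with rfl | hk
  · simp
  have h1 : ((Finset.univ : Finset (Fin k × Fin k)).filter (fun p => p.1 = p.2)).card = k := by
    have himg : (Finset.univ : Finset (Fin k × Fin k)).filter (fun p => p.1 = p.2)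
        = Finset.image (fun i : Fin k => (i, i)) Finset.univ := by
      ext ⟨x, y⟩
      simp [Prod.ext_iff, eq_comm]
    rw [himg, Finset.card_image_of_injective _ (fun i j hij => (Prod.ext_iff.mp hij).1),
      Finset.card_univ, Fintype.card_fin]
  have h2 := Finset.card_filter_add_card_filter_not
    (s := (Finset.univ : Finset (Fin k × Fin k))) (p := fun p => p.1 = p.2)
  have h3 : (Finset.univ : Finset (Fin k × Fin k)).card = k * k := by
    simp [Finset.card_univ]
  have h4 : k * k = k * (k-1) + k := by
    obtain ⟨j, rfl⟩ : ∃ j, k = j + 1 := ⟨k-1, by omega⟩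
    simp [Nat.add_sub_cancel]
    ring
  have h5 : ((Finset.univ : Finset (Fin k × Fin k)).filter (fun p => ¬ p.1 = p.2)).card
      = ((Finset.univ : Finset (Fin k × Fin k)).filter (fun p => p.1 ≠ p.2)).card := rfl
  omega

lemma construction (k : ℕ) (hk : 4 ≤ k) (n : ℕ) :
    ∃ a : ℕ, n < a ∧ 1 < a ∧ 2 * Nat.factorial k + k * (k - 1) ≤ Nk k a := by
  set t := n + 3 with htdef
  have ht : 3 ≤ t := by omega
  set a := Nat.multinomial Finset.univ (mm1 k t) with hadef
  have hsumge : 12*t - 2 ≤ ∑ i, mm1 k t i := by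
    rw [split4_sum hk]
    have f0 : mm1 k t ⟨0, by omega⟩ = 6*t-1 := rfl
    have f1 : mm1 k t ⟨1, by omega⟩ = 3*t := rfl
    have f2 : mm1 k t ⟨2, by omega⟩ = t-1 := rfl
    have f3 : mm1 k t ⟨3, by omega⟩ = 2*t := rfl
    rw [f0, f1, f2, f3]
    omega
  have hsa : ∑ i, mm1 k t i ≤ a :=
    sum_le_multinomial _ ⟨0, by omega⟩ ⟨1, by omega⟩ (by simp [Fin.ext_iff])
      (mm1_pos ht _) (mm1_pos ht _)
  have ha3 : 3 ≤ a := by omega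
  have ha1 : 1 < a := by omega
  have han : n < a := by omega
  set F1 := Finset.image (fun σ : Equiv.Perm (Fin k) => mm1 k t ∘ σ) Finset.univ with hF1
  set F2 := Finset.image (fun σ : Equiv.Perm (Fin k) => mm2 k t ∘ σ) Finset.univ with hF2
  set F3 := Finset.image (gfun k a)
    ((Finset.univ : Finset (Fin k × Fin k)).filter (fun p => p.1 ≠ p.2)) with hF3
  have hinj1 : Function.Injective (fun σ : Equiv.Perm (Fin k) => mm1 k t ∘ σ) := by
    intro σ τ h
    ext x
    exact congrArg Fin.val (mm1_inj ht (congrFun h x))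
  have hinj2 : Function.Injective (fun σ : Equiv.Perm (Fin k) => mm2 k t ∘ σ) := by
    intro σ τ h
    ext x
    exact congrArg Fin.val (mm2_inj ht (congrFun h x))
  have hc1 : F1.card = k ! := by
    rw [hF1, Finset.card_image_of_injective _ hinj1, Finset.card_univ, Fintype.card_perm,
      Fintype.card_fin]
  have hc2 : F2.card = k ! := by
    rw [hF2, Finset.card_image_of_injective _ hinj2, Finset.card_univ, Fintype.card_perm,
      Fintype.card_fin]
  have hc3 : F3.card = k * (k-1) := by
    rw [hF3, Finset.card_image_of_injOn ((gfun_injOn ha3).mono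
      (fun p hp => by simpa using (Finset.mem_filter.mp hp).2))]
    exact offdiag_card
  have hd12 : Disjoint F1 F2 := by
    rw [Finset.disjoint_left]
    rintro x hx1 hx2
    rw [hF1, Finset.mem_image] at hx1
    obtain ⟨σ, _, rfl⟩ := hx1
    rw [hF2, Finset.mem_image] at hx2
    obtain ⟨τ, _, hτ⟩ := hx2
    have hval := congrFun hτ (τ⁻¹ ⟨2, by omega⟩)
    simp only [Function.comp_apply, Equiv.Perm.inv_def, Equiv.apply_symm_apply] at hval
    have h2 : mm2 k t ⟨2, by omega⟩ = t := rfl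
    exact mm1_ne_t ht _ (hval.symm.trans h2)
  have hd3 : Disjoint (F1 ∪ F2) F3 := by
    rw [Finset.disjoint_left]
    rintro x hx hx3
    rw [Finset.mem_union] at hx
    have hxpos : ∀ z, 0 < x z := by
      rcases hx with hx | hx
      · rw [hF1, Finset.mem_image] at hx
        obtain ⟨σ, _, rfl⟩ := hx
        exact fun z => mm1_pos ht _
      · rw [hF2, Finset.mem_image] at hx
        obtain ⟨σ, _, rfl⟩ := hx
        exact fun z => mm2_pos ht _
    rw [hF3, Finset.mem_image] at hx3
    obtain ⟨p, hpmem, hpe⟩ := hx3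
    have hne : ∃ z : Fin k, z ≠ p.1 ∧ z ≠ p.2 := by
      by_contra hcon
      push_neg at hcon
      have g0 : (0:ℕ) = p.1.val ∨ (0:ℕ) = p.2.val := by
        rcases Classical.em ((⟨0, by omega⟩ : Fin k) = p.1) with h | h
        · exact Or.inl (congrArg Fin.val h)
        · exact Or.inr (congrArg Fin.val (hcon _ h))
      have g1 : (1:ℕ) = p.1.val ∨ (1:ℕ) = p.2.val := by
        rcases Classical.em ((⟨1, by omega⟩ : Fin k) = p.1) with h | h
        · exact Or.inl (congrArg Fin.val h)
        · exact Or.inr (congrArg Fin.val (hcon _ h))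
      have g2 : (2:ℕ) = p.1.val ∨ (2:ℕ) = p.2.val := by
        rcases Classical.em ((⟨2, by omega⟩ : Fin k) = p.1) with h | h
        · exact Or.inl (congrArg Fin.val h)
        · exact Or.inr (congrArg Fin.val (hcon _ h))
      omega
    obtain ⟨z, hz1, hz2⟩ := hne
    have hzero : gfun k a p z = 0 := by simp [gfun, hz1, hz2]
    have := hxpos z
    rw [← hpe] at this
    omega
  have hsub : ↑(F1 ∪ F2 ∪ F3) ⊆ {m : Fin k → ℕ | Nat.multinomial Finset.univ m = a} := by
    intro x hx
    simp only [Finset.coe_union, Set.mem_union, Finset.mem_coe] at hx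
    simp only [Set.mem_setOf_eq]
    rcases hx with (hx | hx) | hx
    · rw [hF1, Finset.mem_image] at hx
      obtain ⟨σ, _, rfl⟩ := hx
      rw [multinomial_comp_perm]
    · rw [hF2, Finset.mem_image] at hx
      obtain ⟨σ, _, rfl⟩ := hx
      rw [multinomial_comp_perm, mm_multinomial_eq hk ht]
    · rw [hF3, Finset.mem_image] at hx
      obtain ⟨p, hpmem, rfl⟩ := hx
      exact gfun_multinomial hk ha3 p (Finset.mem_filter.mp hpmem).2
  have hfin : {m : Fin k → ℕ | Nat.multinomial Finset.univ m = a}.Finite :=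
    Sa_finite (by omega) ha1
  have hle := Set.ncard_le_ncard hsub hfin
  rw [Set.ncard_coe_finset] at hle
  have hcard : (F1 ∪ F2 ∪ F3).card = k ! + k ! + k*(k-1) := by
    rw [Finset.card_union_of_disjoint hd3, Finset.card_union_of_disjoint hd12, hc1, hc2, hc3]
  refine ⟨a, han, ha1, ?_⟩
  unfold Nk
  omega

theorem infinitely_many_large_Nk (k : ℕ) (hk : 4 ≤ k) :
    {a : ℕ | 1 < a ∧ 2 * Nat.factorial k + k * (k - 1) ≤ Nk k a}.Infinite := by
  by_contra hcon
  rw [Set.not_infinite] at hcon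
  obtain ⟨n, hn⟩ := hcon.bddAbove
  obtain ⟨a, h1, h2, h3⟩ := construction k hk n
  have := hn (Set.mem_setOf_eq ▸ ⟨h2, h3⟩ : a ∈ _)
  omega
end
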